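/- Operators of the A-subgroup at opposite central charges commute: let t > 0, k ∈ ℝ, λ : [0,2π] → ℂ with Re λ, Im λ ∈ L², let α₁, α₂ ∈ C²([0,2π],ℝ) be based loops (αᵢ(0) = αᵢ(2π) = 0), and s₁, s₂ ∈ ℝ. Then pointwise on all functions f : C₀ → ℂ, ρ_{λ,k}(α₁,0,s₁) ∘ ρ_{λ,−k}(α₂,0,s₂) = ρ_{λ,−k}(α₂,0,s₂) ∘ ρ_{λ,k}(α₁,0,s₁). -/

import Mathlib

open MeasureTheory Real

/-- Extension of a function on `[0, 2π]` to `ℝ` (by `0` outside). -/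
noncomputable def pathExt (x : Set.Icc (0 : ℝ) (2 * π) → ℝ) : ℝ → ℝ :=
  fun u => if h : u ∈ Set.Icc (0 : ℝ) (2 * π) then x ⟨u, h⟩ else 0

/-- The integration-by-parts form `⟨h,x⟩ = h'(2π)x(2π) - ∫₀^{2π} x(u)h''(u) du` of the
Stieltjes integral `∫₀^{2π} h'(u) dx(u)`. -/
noncomputable def wienerPairing (h : ℝ → ℝ) (x : Set.Icc (0 : ℝ) (2 * π) → ℝ) : ℝ :=
  deriv h (2 * π) * pathExt x (2 * π)
    - ∫ u in (0 : ℝ)..(2 * π), pathExt x u * deriv (deriv h) u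

/-- The operator `ρ_{λ,k}(α, b, s)` of the centrally extended based loop group of the
`ax+b` group, acting on functionals of paths `x` on `[0,2π]`:
`(ρ_{λ,k}(α,b,s)f)(x) = e^{is} · exp(ik(α(2π)x(2π) - ∫₀^{2π} x α' du))
  · exp(-(1/(4t))∫α'² - (1/(2t))⟨α,x⟩) · exp(∫₀^{2π} λ b e^{x(u)} du) · f(x+α)`. -/
noncomputable def wienerRhoC (t k : ℝ) (lam : ℝ → ℂ) (α b : ℝ → ℝ) (s : ℝ)
    (f : (Set.Icc (0 : ℝ) (2 * π) → ℝ) → ℂ) (x : Set.Icc (0 : ℝ) (2 * π) → ℝ) : ℂ :=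
  Complex.exp (Complex.I * (s : ℂ)) *
  Complex.exp (Complex.I * (k : ℂ) *
    ((α (2 * π) * pathExt x (2 * π)
        - ∫ u in (0 : ℝ)..(2 * π), pathExt x u * deriv α u : ℝ) : ℂ)) *
  Complex.exp (((-(1 / (4 * t)) * ∫ u in (0 : ℝ)..(2 * π), (deriv α u) ^ 2)
      - (1 / (2 * t)) * wienerPairing α x : ℝ)) *
  Complex.exp (∫ u in (0 : ℝ)..(2 * π), lam u * (b u : ℂ) *
      Complex.exp ((pathExt x u : ℝ) : ℂ)) *
  f (x + fun u => α u.1)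

/- ### Auxiliary lemmas -/

private lemma aux_deriv_cont {α : ℝ → ℝ} (h : ContDiff ℝ 2 α) : Continuous (deriv α) :=
  h.continuous_deriv (by norm_num)

private lemma aux_deriv2_cont {α : ℝ → ℝ} (h : ContDiff ℝ 2 α) :
    Continuous (deriv (deriv α)) :=
  (h.iterate_deriv' 1 1).continuous_deriv le_rfl

private lemma aux_hasDerivAt {α : ℝ → ℝ} (h : ContDiff ℝ 2 α) (u : ℝ) :
    HasDerivAt α (deriv α u) u :=
  ((h.differentiable (by norm_num)) u).hasDerivAt

private lemma aux_hasDerivAt2 {α : ℝ → ℝ} (h : ContDiff ℝ 2 α) (u : ℝ) :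
    HasDerivAt (deriv α) (deriv (deriv α) u) u :=
  (((h.iterate_deriv' 1 1).differentiable (by norm_num)) u).hasDerivAt

/-- Cross identity: `∫ (α₁ α₂' + α₂ α₁') = 0` for based loops. -/
private lemma aux_cross (α₁ α₂ : ℝ → ℝ) (h1 : ContDiff ℝ 2 α₁) (h2 : ContDiff ℝ 2 α₂)
    (h10 : α₁ 0 = 0) (h1l : α₁ (2 * π) = 0) :
    (∫ u in (0:ℝ)..(2 * π), α₁ u * deriv α₂ u)
      + ∫ u in (0:ℝ)..(2 * π), α₂ u * deriv α₁ u = 0 := by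
  have hint1 : IntervalIntegrable (fun u => α₁ u * deriv α₂ u) volume 0 (2 * π) :=
    (h1.continuous.mul (aux_deriv_cont h2)).intervalIntegrable _ _
  have hint2 : IntervalIntegrable (fun u => α₂ u * deriv α₁ u) volume 0 (2 * π) :=
    (h2.continuous.mul (aux_deriv_cont h1)).intervalIntegrable _ _
  have hD : ∀ u ∈ Set.uIcc (0:ℝ) (2 * π),
      HasDerivAt (fun v => α₁ v * α₂ v) (α₁ u * deriv α₂ u + α₂ u * deriv α₁ u) u := by
    intro u _
    have : HasDerivAt (fun v => α₁ v * α₂ v)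
        (deriv α₁ u * α₂ u + α₁ u * deriv α₂ u) u := (aux_hasDerivAt h1 u).mul (aux_hasDerivAt h2 u)
    convert this using 1; ring
  have := intervalIntegral.integral_eq_sub_of_hasDerivAt hD
    ((hint1.add hint2) : IntervalIntegrable
      (fun u => α₁ u * deriv α₂ u + α₂ u * deriv α₁ u) volume 0 (2 * π))
  rw [← intervalIntegral.integral_add hint1 hint2]
  rw [this, h10, h1l]
  ring

/-- Symmetry of second-derivative pairing for based loops. -/
private lemma aux_symm (α₁ α₂ : ℝ → ℝ) (h1 : ContDiff ℝ 2 α₁) (h2 : ContDiff ℝ 2 α₂)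
    (h10 : α₁ 0 = 0) (h1l : α₁ (2 * π) = 0) (h20 : α₂ 0 = 0) (h2l : α₂ (2 * π) = 0) :
    (∫ u in (0:ℝ)..(2 * π), α₁ u * deriv (deriv α₂) u)
      = ∫ u in (0:ℝ)..(2 * π), α₂ u * deriv (deriv α₁) u := by
  have hint1 : IntervalIntegrable (fun u => α₁ u * deriv (deriv α₂) u) volume 0 (2 * π) :=
    (h1.continuous.mul (aux_deriv2_cont h2)).intervalIntegrable _ _
  have hint2 : IntervalIntegrable (fun u => α₂ u * deriv (deriv α₁) u) volume 0 (2 * π) :=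
    (h2.continuous.mul (aux_deriv2_cont h1)).intervalIntegrable _ _
  have hD : ∀ u ∈ Set.uIcc (0:ℝ) (2 * π),
      HasDerivAt (fun v => α₁ v * deriv α₂ v - α₂ v * deriv α₁ v)
        (α₁ u * deriv (deriv α₂) u - α₂ u * deriv (deriv α₁) u) u := by
    intro u _
    have : HasDerivAt (fun v => α₁ v * deriv α₂ v - α₂ v * deriv α₁ v)
        ((deriv α₁ u * deriv α₂ u + α₁ u * deriv (deriv α₂) u)
          - (deriv α₂ u * deriv α₁ u + α₂ u * deriv (deriv α₁) u)) u :=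
      ((aux_hasDerivAt h1 u).mul (aux_hasDerivAt2 h2 u)).sub
      ((aux_hasDerivAt h2 u).mul (aux_hasDerivAt2 h1 u))
    convert this using 1; ring
  have := intervalIntegral.integral_eq_sub_of_hasDerivAt hD
    ((hint1.sub hint2) : IntervalIntegrable
      (fun u => α₁ u * deriv (deriv α₂) u - α₂ u * deriv (deriv α₁) u) volume 0 (2 * π))
  have hsub := (intervalIntegral.integral_sub hint1 hint2).symm.trans this
  rw [h10, h1l, h20, h2l] at hsub
  simp only [zero_mul, mul_zero, sub_zero, sub_self] at hsub
  linarith [hsub]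

private lemma exp_prod_collapse (a b c d e g h i F : ℂ) :
    (Complex.exp a * Complex.exp b * Complex.exp c * Complex.exp d) *
      ((Complex.exp e * Complex.exp g * Complex.exp h * Complex.exp i) * F)
      = Complex.exp (a + b + c + d + e + g + h + i) * F := by
  simp only [Complex.exp_add]; ring

/-- Operators of the `A`-subgroup at opposite central charges commute:
`ρ_{λ,k}(α₁,0,s₁) ∘ ρ_{λ,-k}(α₂,0,s₂) = ρ_{λ,-k}(α₂,0,s₂) ∘ ρ_{λ,k}(α₁,0,s₁)`
pointwise on all functionals `f : C₀ → ℂ` (evaluated at points of `C₀`). -/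
theorem wienerRhoC_A_subgroup_commute (t k : ℝ) (ht : 0 < t) (lam : ℝ → ℂ)
    (hlamRe : MemLp (fun u => (lam u).re) 2 (volume.restrict (Set.Ioc 0 (2 * π))))
    (hlamIm : MemLp (fun u => (lam u).im) 2 (volume.restrict (Set.Ioc 0 (2 * π))))
    (α₁ α₂ : ℝ → ℝ) (hα₁ : ContDiff ℝ 2 α₁) (hα₂ : ContDiff ℝ 2 α₂)
    (hα₁0 : α₁ 0 = 0) (hα₂0 : α₂ 0 = 0)
    (hα₁l : α₁ (2 * π) = 0) (hα₂l : α₂ (2 * π) = 0) (s₁ s₂ : ℝ)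
    (f : (Set.Icc (0 : ℝ) (2 * π) → ℝ) → ℂ)
    (x : Set.Icc (0 : ℝ) (2 * π) → ℝ) (hx : Continuous x)
    (hx0 : x ⟨0, Set.left_mem_Icc.mpr (by positivity)⟩ = 0) :
    wienerRhoC t k lam α₁ (fun _ => 0) s₁ (wienerRhoC t (-k) lam α₂ (fun _ => 0) s₂ f) x
      = wienerRhoC t (-k) lam α₂ (fun _ => 0) s₂
          (wienerRhoC t k lam α₁ (fun _ => 0) s₁ f) x := by
  have h2pi : (0:ℝ) ≤ 2 * π := by positivity
  have hmem : (2 * π) ∈ Set.Icc (0:ℝ) (2 * π) := ⟨h2pi, le_rfl⟩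
  -- continuity of pathExt on the interval
  have hXc : ContinuousOn (pathExt x) (Set.Icc (0:ℝ) (2 * π)) := by
    rw [continuousOn_iff_continuous_restrict]
    convert hx using 1
    funext u
    simp only [Set.restrict_apply, pathExt, dif_pos u.2]
  have hXi : IntervalIntegrable (pathExt x) volume 0 (2 * π) := by
    apply ContinuousOn.intervalIntegrable
    rwa [Set.uIcc_of_le h2pi]
  -- pathExt of shifted paths
  have hshift : ∀ (α : ℝ → ℝ), ∀ u ∈ Set.Icc (0:ℝ) (2 * π),
      pathExt (x + fun v => α v.1) u = pathExt x u + α u := by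
    intro α u hu
    simp only [pathExt, dif_pos hu]
    rfl
  -- integral splitting
  have hIsplit : ∀ (α : ℝ → ℝ) (g : ℝ → ℝ), ContDiff ℝ 2 α → Continuous g →
      (∫ u in (0:ℝ)..(2 * π), pathExt (x + fun v => α v.1) u * g u)
        = (∫ u in (0:ℝ)..(2 * π), pathExt x u * g u)
          + ∫ u in (0:ℝ)..(2 * π), α u * g u := by
    intro α g hα hg
    rw [← intervalIntegral.integral_add (f := fun u => pathExt x u * g u)
      (g := fun u => α u * g u) (hXi.mul_continuousOn hg.continuousOn)
      ((hα.continuous.mul hg).intervalIntegrable _ _)]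
    apply intervalIntegral.integral_congr
    intro u hu
    rw [Set.uIcc_of_le h2pi] at hu
    simp only []
    rw [hshift α u hu]
    ring
  simp only [wienerRhoC, wienerPairing]
  simp only [Complex.ofReal_zero, mul_zero, zero_mul, intervalIntegral.integral_zero]
  rw [hshift α₁ (2 * π) hmem, hshift α₂ (2 * π) hmem, hα₁l, hα₂l, add_zero,
    hIsplit α₁ (deriv α₂) hα₁ (aux_deriv_cont hα₂),
    hIsplit α₁ (deriv (deriv α₂)) hα₁ (aux_deriv2_cont hα₂),
    hIsplit α₂ (deriv α₁) hα₂ (aux_deriv_cont hα₁),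
    hIsplit α₂ (deriv (deriv α₁)) hα₂ (aux_deriv2_cont hα₁),
    add_right_comm x (fun u => α₁ u.1) (fun u => α₂ u.1),
    exp_prod_collapse, exp_prod_collapse]
  congr 2
  have hC := aux_cross α₁ α₂ hα₁ hα₂ hα₁0 hα₁l
  have hD := aux_symm α₁ α₂ hα₁ hα₂ hα₁0 hα₁l hα₂0 hα₂l
  have hC' : ((∫ u in (0:ℝ)..(2 * π), α₁ u * deriv α₂ u : ℝ) : ℂ)
      + ((∫ u in (0:ℝ)..(2 * π), α₂ u * deriv α₁ u : ℝ) : ℂ) = 0 := by exact_mod_cast hC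
  have hD' : ((∫ u in (0:ℝ)..(2 * π), α₁ u * deriv (deriv α₂) u : ℝ) : ℂ)
      = ((∫ u in (0:ℝ)..(2 * π), α₂ u * deriv (deriv α₁) u : ℝ) : ℂ) := by exact_mod_cast hD
  push_cast
  linear_combination Complex.I * (k:ℂ) * hC' + (1 / (2 * (t:ℂ))) * hD'
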